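/- Let s_1, …, s_m be a sequence of positive integers. If some s_j = 1 and it is removed from the sequence, the value of A for the resulting sequence is at most the original value (it decreases or stays the same, and in fact strictly decreases when m ≥ 2). Moreover, removing an arbitrary term s_j from the sequence increases the value of A by at most 1. -/
import Mathlib


/-- The potential function on lists:
`A(s_1, …, s_m) = ∑_{j=1}^{m−1} |s_j − s_{j+1} − 1| + |s_m − 2|`,
with `A = 0` on the empty list and `A(s_1) = |s_1 − 2|` on singletons. -/
def Apot : List ℕ → ℕ
  | [] => 0
  | [a] => ((a : ℤ) - 2).natAbs
  | a :: b :: t => ((a : ℤ) - (b : ℤ) - 1).natAbs + Apot (b :: t)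

/-- Removing a term equal to `1` from a sequence of positive integers does not
increase `A` (and strictly decreases it when the sequence has length at least
`2`); removing an arbitrary term increases `A` by at most `1`. -/
theorem stmt_4 (l₁ l₂ : List ℕ) (a : ℕ)
    (hpos : ∀ x ∈ l₁ ++ a :: l₂, 1 ≤ x) :
    (a = 1 → Apot (l₁ ++ l₂) ≤ Apot (l₁ ++ a :: l₂) ∧
      (2 ≤ (l₁ ++ a :: l₂).length → Apot (l₁ ++ l₂) < Apot (l₁ ++ a :: l₂))) ∧
    Apot (l₁ ++ l₂) ≤ Apot (l₁ ++ a :: l₂) + 1 := by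
  induction l₁ with
  | nil =>
    cases l₂ with
    | nil =>
      have ha : 1 ≤ a := hpos a (by simp)
      simp [Apot]
    | cons b t =>
      have hb : 1 ≤ b := hpos b (by simp)
      simp only [List.nil_append, Apot, List.length_cons]
      refine ⟨fun h => ?_, by omega⟩
      subst h
      omega
  | cons c l₁' ih =>
    cases l₁' with
    | nil =>
      have hc : 1 ≤ c := hpos c (by simp)
      have ha : 1 ≤ a := hpos a (by simp)
      cases l₂ with
      | nil =>
        simp [Apot]
        omega
      | cons b t =>
        have hb : 1 ≤ b := hpos b (by simp)
        simp only [List.cons_append, List.nil_append, Apot, List.length_cons]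
        refine ⟨fun h => ?_, by omega⟩
        subst h
        omega
    | cons d t' =>
      have hpos' : ∀ x ∈ (d :: t') ++ a :: l₂, 1 ≤ x := by
        intro x hx
        exact hpos x (by simp at hx ⊢; tauto)
      have := ih hpos'
      simp only [List.cons_append, List.append_eq, Apot, List.length_cons] at this ⊢
      obtain ⟨h1, h2⟩ := this
      refine ⟨fun h => ?_, by omega⟩
      obtain ⟨h3, h4⟩ := h1 h
      refine ⟨by omega, fun _ => ?_⟩
      have := h4 (by simp; omega)
      omega
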